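/- Let M > 0 and set α := 1/(1 + e^{−M}). Then for all real numbers M₁, M₂ with −M ≤ M₂ < M₁ ≤ M one has −(α+1)(M₁−M₂) < log((1+e^{M₂})/(1+e^{M₁})) < (α−1)(M₁−M₂). Consequently |(M₁ − M₂) + log((1+e^{M₂})/(1+e^{M₁}))| ≤ α(M₁ − M₂). -/

import Mathlib

/-- The analytic inequality behind the local contraction constant `α(M) = 1/(1+e^{-M})`
for the two-state multiplicative Poisson operator: for `-M ≤ M₂ < M₁ ≤ M`,
`-(α+1)(M₁-M₂) < log((1+e^{M₂})/(1+e^{M₁})) < (α-1)(M₁-M₂)` and consequently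
`|(M₁-M₂) + log((1+e^{M₂})/(1+e^{M₁}))| ≤ α (M₁-M₂)`. -/
theorem two_state_contraction_inequality (M : ℝ) (hM : 0 < M)
    (α : ℝ) (hα : α = 1 / (1 + Real.exp (-M)))
    (M₁ M₂ : ℝ) (h₂ : -M ≤ M₂) (h₁₂ : M₂ < M₁) (h₁ : M₁ ≤ M) :
    (-(α + 1) * (M₁ - M₂) < Real.log ((1 + Real.exp M₂) / (1 + Real.exp M₁)) ∧
      Real.log ((1 + Real.exp M₂) / (1 + Real.exp M₁)) < (α - 1) * (M₁ - M₂)) ∧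
    |(M₁ - M₂) + Real.log ((1 + Real.exp M₂) / (1 + Real.exp M₁))| ≤ α * (M₁ - M₂) := by
  have hα0 : 0 < α := by rw [hα]; positivity
  set g : ℝ → ℝ := fun x => Real.log (1 + Real.exp x) with hg
  have hder : ∀ x : ℝ, HasDerivAt g (Real.exp x / (1 + Real.exp x)) x := by
    intro x
    have h1 : HasDerivAt (fun x : ℝ => 1 + Real.exp x) (Real.exp x) x :=
      (Real.hasDerivAt_exp x).const_add 1
    exact h1.log (by positivity)
  have hlt1 : ∀ x : ℝ, Real.exp x / (1 + Real.exp x) < 1 := by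
    intro x
    rw [div_lt_one (by positivity)]
    linarith [Real.exp_pos x]
  -- k(x) = x - g(x) is strictly monotone
  have hk : StrictMono (fun x => x - g x) := by
    apply strictMono_of_deriv_pos
    intro x
    have hd : HasDerivAt (fun x => x - g x) (1 - Real.exp x / (1 + Real.exp x)) x :=
      (hasDerivAt_id x).sub (hder x)
    rw [hd.deriv]
    linarith [hlt1 x]
  have hL1 : g M₁ - g M₂ < M₁ - M₂ := by
    have := hk h₁₂
    simp only at this
    linarith
  -- derivative lower bound on (-M, ∞)
  have hgrow : ∀ x : ℝ, -M < x → 1 - α < Real.exp x / (1 + Real.exp x) := by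
    intro x hx
    have e1 : Real.exp x / (1 + Real.exp x) = 1 / (1 + Real.exp (-x)) := by
      rw [Real.exp_neg]
      have h0 : Real.exp x ≠ 0 := (Real.exp_pos x).ne'
      field_simp
      ring
    have e2 : (1 : ℝ) - α = Real.exp (-M) / (1 + Real.exp (-M)) := by
      rw [hα]
      have h0 : (1 : ℝ) + Real.exp (-M) ≠ 0 := by positivity
      field_simp
      ring
    rw [e1, e2, div_lt_div_iff₀ (by positivity) (by positivity)]
    have h3 : Real.exp (-M) * Real.exp (-x) < 1 := by
      rw [← Real.exp_add]
      have : -M + -x < 0 := by linarith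
      calc Real.exp (-M + -x) < Real.exp 0 := Real.exp_lt_exp.mpr this
        _ = 1 := Real.exp_zero
    nlinarith [Real.exp_pos (-M), Real.exp_pos (-x)]
  -- h(x) = g(x) - (1-α) x is strictly monotone on [-M, ∞)
  have hcont : Continuous g :=
    continuous_iff_continuousAt.mpr fun x => (hder x).continuousAt
  have hh : StrictMonoOn (fun x => g x - (1 - α) * x) (Set.Ici (-M)) := by
    apply strictMonoOn_of_deriv_pos (convex_Ici _)
    · exact (hcont.sub (continuous_const.mul continuous_id)).continuousOn
    · intro x hx
      rw [interior_Ici] at hx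
      have hd : HasDerivAt (fun x => g x - (1 - α) * x)
          (Real.exp x / (1 + Real.exp x) - (1 - α) * 1) x :=
        (hder x).sub ((hasDerivAt_id x).const_mul (1 - α))
      rw [hd.deriv]
      have := hgrow x hx
      linarith
  have hL2 : (1 - α) * (M₁ - M₂) < g M₁ - g M₂ := by
    have h2m : M₂ ∈ Set.Ici (-M) := h₂
    have h1m : M₁ ∈ Set.Ici (-M) := by simp only [Set.mem_Ici]; linarith
    have := hh h2m h1m h₁₂
    simp only at this
    nlinarith
  have hlog : Real.log ((1 + Real.exp M₂) / (1 + Real.exp M₁)) = g M₂ - g M₁ :=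
    Real.log_div (by positivity) (by positivity)
  rw [hlog]
  have hd12 : 0 < M₁ - M₂ := by linarith
  refine ⟨⟨by nlinarith, by nlinarith⟩, ?_⟩
  rw [abs_le]
  constructor <;> nlinarith
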